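/- Let G be a finite group with augmentation ideal I ⊂ ℤG and ideal (I,2) = ker(ℤG → ℤ/2). There is an isomorphism of ℤG-modules φ : (I,2) → Γ((I,2))/Γ(I) given by φ(2) = [2 ⊗ 2] and φ(g − 1) = [2 ⊗ (g−1) + (g−1) ⊗ 2] for g ∈ G. -/

import Mathlib

set_option maxHeartbeats 1000000
set_option synthInstance.maxHeartbeats 400000


open TensorProduct

/-- The submodule of symmetric tensors of `V ⊗[R] V`, i.e. the elements fixed by the swap
involution `a ⊗ b ↦ b ⊗ a`. -/
noncomputable def symTensorsR (R : Type*) (V : Type*) [CommRing R] [AddCommGroup V]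
    [Module R V] :=
  LinearMap.ker ((TensorProduct.comm R V V).toLinearMap - LinearMap.id)

/-- The subgroup of symmetric tensors of `V ⊗[ℤ] V`.  For `V` free abelian this realises
Whitehead's quadratic functor `Γ(V)`. -/
noncomputable abbrev symTensors (V : Type*) [AddCommGroup V] [Module ℤ V] :=
  symTensorsR ℤ V

section SubQuot
variable {R : Type*} [CommRing R] {G : Type*} [Group G] {V : Type*} [AddCommGroup V]
  [Module R V]

/-- The restriction of a representation to an invariant submodule. -/
def subRep (ρ : Representation R G V) (p : Submodule R V)
    (hp : ∀ g : G, ∀ x ∈ p, ρ g x ∈ p) : Representation R G p where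
  toFun g := (ρ g).restrict (hp g)
  map_one' := by
    ext x
    simp [LinearMap.restrict_apply]
  map_mul' g h := by
    ext x
    simp [LinearMap.restrict_apply, map_mul]

/-- The representation induced on the quotient by an invariant submodule. -/
noncomputable def quotRep (ρ : Representation R G V) (p : Submodule R V)
    (hp : ∀ g : G, ∀ x ∈ p, ρ g x ∈ p) : Representation R G (V ⧸ p) where
  toFun g := Submodule.mapQ p p (ρ g) (hp g)
  map_one' := by
    apply LinearMap.ext
    intro x
    obtain ⟨v, rfl⟩ := Submodule.Quotient.mk_surjective p x
    simp [Submodule.mapQ_apply]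
  map_mul' g h := by
    apply LinearMap.ext
    intro x
    obtain ⟨v, rfl⟩ := Submodule.Quotient.mk_surjective p x
    simp [Submodule.mapQ_apply, map_mul]

end SubQuot

section GammaRep
variable {R : Type*} [CommRing R] {G : Type*} [Group G] {V : Type*} [AddCommGroup V]
  [Module R V]

lemma symTensors_invariant (ρ : Representation R G V) :
    ∀ g : G, ∀ x ∈ symTensorsR R V, (ρ.tprod ρ) g x ∈ symTensorsR R V := by
  intro g x hx
  have key : ∀ y : TensorProduct R V V, (TensorProduct.comm R V V) ((ρ.tprod ρ) g y)
      = (ρ.tprod ρ) g ((TensorProduct.comm R V V) y) := by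
    intro y
    induction y using TensorProduct.induction_on with
    | zero => simp
    | tmul a b => simp [Representation.tprod_apply]
    | add y z hy hz =>
        simp only [map_add, hy, hz]
  simp only [symTensorsR, LinearMap.mem_ker, LinearMap.sub_apply,
    LinearMap.id_apply, sub_eq_zero, LinearEquiv.coe_coe] at hx ⊢
  rw [key, hx]

/-- Whitehead's functor `Γ(V)` (realised as the symmetric tensors in `V ⊗ V`) as a
representation, with the diagonal `G`-action. -/
noncomputable def gammaRep (ρ : Representation R G V) : Representation R G ↥(symTensorsR R V) :=
  subRep (ρ.tprod ρ) (symTensorsR R V) (symTensors_invariant ρ)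

/-- The direct sum of two representations. -/
def prodRep {W : Type*} [AddCommGroup W] [Module R W]
    (ρ : Representation R G V) (σ : Representation R G W) : Representation R G (V × W) where
  toFun g := (ρ g).prodMap (σ g)
  map_one' := by
    apply LinearMap.ext
    rintro ⟨a, b⟩
    simp
  map_mul' g h := by
    apply LinearMap.ext
    rintro ⟨a, b⟩
    simp [map_mul]

end GammaRep

section GroupRing
variable (G : Type*) [Group G]

/-- The left regular representation of `G` on the group ring `ℤG`. -/
noncomputable def regRep : Representation ℤ G (MonoidAlgebra ℤ G) where
  toFun g := LinearMap.mulLeft ℤ (MonoidAlgebra.of ℤ G g)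
  map_one' := by
    apply LinearMap.ext; intro x
    simp [MonoidAlgebra.of_apply, ← MonoidAlgebra.one_def]
  map_mul' g h := by
    apply LinearMap.ext; intro x
    simp only [MonoidAlgebra.of_apply, LinearMap.mulLeft_apply, Module.End.mul_apply]
    rw [← mul_assoc, MonoidAlgebra.single_mul_single, mul_one]

/-- The augmentation map `ε : ℤG → ℤ`. -/
noncomputable def aug : MonoidAlgebra ℤ G →ₐ[ℤ] ℤ := MonoidAlgebra.lift ℤ ℤ G 1

/-- The augmentation ideal `I = ker(ε : ℤG → ℤ)`. -/
noncomputable def augI : Ideal (MonoidAlgebra ℤ G) := RingHom.ker (aug G).toRingHom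

/-- The mod 2 augmentation map `ℤG → ℤ/2`. -/
noncomputable def aug2 : MonoidAlgebra ℤ G →+* ZMod 2 :=
  (Int.castRingHom (ZMod 2)).comp (aug G).toRingHom

/-- The ideal `(I, 2) = ker(ℤG → ℤ/2)` generated by the augmentation ideal and `2`. -/
noncomputable def I2 : Ideal (MonoidAlgebra ℤ G) := RingHom.ker (aug2 G)

/-- The norm element `N = ∑_{g ∈ G} g ∈ ℤG`. -/
noncomputable def Nelt [Fintype G] : MonoidAlgebra ℤ G := ∑ g : G, MonoidAlgebra.of ℤ G g

/-- The (left) ideal of `ℤG` generated by the norm element `N`; the quotient by it is `ℤG/N`. -/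
noncomputable def NIdeal [Fintype G] : Ideal (MonoidAlgebra ℤ G) := Ideal.span {Nelt G}

/-- The left ideal `(N, 2)` of `ℤG` generated by the norm element `N` and `2`. -/
noncomputable def N2 [Fintype G] : Ideal (MonoidAlgebra ℤ G) := Ideal.span {Nelt G, 2}

lemma aug_single (g : G) : aug G (MonoidAlgebra.single g 1) = 1 := by
  simp [aug, MonoidAlgebra.lift_single]

lemma of_sub_one_mem_augI (g : G) :
    MonoidAlgebra.of ℤ G g - 1 ∈ (augI G).restrictScalars ℤ := by
  simp [augI, RingHom.mem_ker, map_sub, aug_single]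

lemma of_sub_one_mem_I2 (g : G) :
    MonoidAlgebra.of ℤ G g - 1 ∈ (I2 G).restrictScalars ℤ := by
  simp [I2, aug2, RingHom.mem_ker, map_sub, aug_single]

lemma two_mem_I2 : (2 : MonoidAlgebra ℤ G) ∈ (I2 G).restrictScalars ℤ := by
  have : (aug2 G) 2 = 2 := by simp [map_ofNat]
  simp [I2, RingHom.mem_ker, this]
  decide

lemma N_mem_I2 [Fintype G] (h : Even (Fintype.card G)) :
    Nelt G ∈ (I2 G).restrictScalars ℤ := by
  have : (aug2 G) (Nelt G) = (Fintype.card G : ZMod 2) := by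
    simp [Nelt, map_sum, aug2, aug_single]
  simp only [Submodule.restrictScalars_mem, I2, RingHom.mem_ker, this]
  rw [ZMod.natCast_eq_zero_iff]
  exact h.two_dvd

lemma N_mem_N2 [Fintype G] : Nelt G ∈ (N2 G).restrictScalars ℤ :=
  Ideal.subset_span (by simp)

lemma two_mem_N2 [Fintype G] : (2 : MonoidAlgebra ℤ G) ∈ (N2 G).restrictScalars ℤ :=
  Ideal.subset_span (by simp)

lemma ideal_invariant (J : Ideal (MonoidAlgebra ℤ G)) :
    ∀ g : G, ∀ x ∈ J.restrictScalars ℤ, (regRep G) g x ∈ J.restrictScalars ℤ := by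
  intro g x hx
  exact J.mul_mem_left _ hx

/-- A (left) ideal of `ℤG`, regarded as a representation of `G`. -/
noncomputable def idealRep (J : Ideal (MonoidAlgebra ℤ G)) :
    Representation ℤ G ↥(J.restrictScalars ℤ) :=
  subRep (regRep G) (J.restrictScalars ℤ) (ideal_invariant G J)

/-- The quotient `ℤG/N` of `ℤG` by the ideal generated by the norm element, as a
representation of `G`. -/
noncomputable def quotNRep [Fintype G] :
    Representation ℤ G (MonoidAlgebra ℤ G ⧸ (NIdeal G).restrictScalars ℤ) :=
  quotRep (regRep G) ((NIdeal G).restrictScalars ℤ) (ideal_invariant G (NIdeal G))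

/-- `2` as an element of `(I,2)`. -/
noncomputable def twoI2 : ↥((I2 G).restrictScalars ℤ) := ⟨2, two_mem_I2 G⟩

/-- `g - 1` as an element of `(I,2)`. -/
noncomputable def gm1 (g : G) : ↥((I2 G).restrictScalars ℤ) :=
  ⟨MonoidAlgebra.of ℤ G g - 1, of_sub_one_mem_I2 G g⟩

/-- `g - 1` as an element of the augmentation ideal `I`. -/
noncomputable def gm1I (g : G) : ↥((augI G).restrictScalars ℤ) :=
  ⟨MonoidAlgebra.of ℤ G g - 1, of_sub_one_mem_augI G g⟩

/-- The norm element as an element of `(I,2)` (for `G` of even order). -/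
noncomputable def NeltI2 [Fintype G] (h : Even (Fintype.card G)) :
    ↥((I2 G).restrictScalars ℤ) := ⟨Nelt G, N_mem_I2 G h⟩

/-- The norm element as an element of `(N,2)`. -/
noncomputable def NeltN2 [Fintype G] : ↥((N2 G).restrictScalars ℤ) := ⟨Nelt G, N_mem_N2 G⟩

end GroupRing

section Stmt7
variable (G : Type*) [Group G]

lemma tmul_self_mem_symTensors {M : Type*} [AddCommGroup M] [Module ℤ M] (a : M) :
    a ⊗ₜ[ℤ] a ∈ symTensors M := by
  simp [symTensors, symTensorsR, LinearMap.mem_ker, LinearMap.sub_apply]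

lemma tmul_symm_mem_symTensors {M : Type*} [AddCommGroup M] [Module ℤ M] (a b : M) :
    a ⊗ₜ[ℤ] b + b ⊗ₜ[ℤ] a ∈ symTensors M := by
  simp only [symTensors, symTensorsR, LinearMap.mem_ker, LinearMap.sub_apply,
    LinearMap.id_apply, map_add, LinearEquiv.coe_coe, TensorProduct.comm_tmul]
  abel

lemma augI_le_I2 : (augI G).restrictScalars ℤ ≤ (I2 G).restrictScalars ℤ := by
  intro x hx
  simp only [Submodule.restrictScalars_mem, augI, I2, RingHom.mem_ker, aug2,
    RingHom.comp_apply, AlgHom.toRingHom_eq_coe, RingHom.coe_coe] at hx ⊢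
  rw [hx]
  simp

/-- The inclusion `I ↪ (I,2)`. -/
noncomputable def inclI : ↥((augI G).restrictScalars ℤ) →ₗ[ℤ] ↥((I2 G).restrictScalars ℤ) :=
  Submodule.inclusion (augI_le_I2 G)

/-- `Γ(I)`, viewed as a submodule of `Γ((I,2))` via the inclusion `I ⊆ (I,2)`. -/
noncomputable def gammaISub : Submodule ℤ ↥(symTensors ↥((I2 G).restrictScalars ℤ)) :=
  Submodule.comap (symTensors ↥((I2 G).restrictScalars ℤ)).subtype
    (Submodule.map (TensorProduct.map (inclI G) (inclI G))
      (symTensors ↥((augI G).restrictScalars ℤ)))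

lemma aug_two_dvd (x : ↥((I2 G).restrictScalars ℤ)) :
    2 ∣ aug G (x : MonoidAlgebra ℤ G) := by
  have hx : aug2 G (x : MonoidAlgebra ℤ G) = 0 := x.2
  simp only [aug2, RingHom.comp_apply, AlgHom.toRingHom_eq_coe, RingHom.coe_coe,
    Int.coe_castRingHom] at hx
  exact_mod_cast (ZMod.intCast_zmod_eq_zero_iff_dvd _ 2).mp hx

/-- Half the augmentation, as a linear map `(I,2) → ℤ`. -/
noncomputable def tauMap : ↥((I2 G).restrictScalars ℤ) →ₗ[ℤ] ℤ where
  toFun x := aug G (x : MonoidAlgebra ℤ G) / 2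
  map_add' x y := by
    obtain ⟨a, ha⟩ := aug_two_dvd G x
    obtain ⟨b, hb⟩ := aug_two_dvd G y
    have h : aug G ((x + y : ↥((I2 G).restrictScalars ℤ)) : MonoidAlgebra ℤ G)
        = 2 * a + 2 * b := by
      rw [Submodule.coe_add, map_add, ha, hb]
    show aug G ((x + y : ↥((I2 G).restrictScalars ℤ)) : MonoidAlgebra ℤ G) / 2
        = aug G (x : MonoidAlgebra ℤ G) / 2 + aug G (y : MonoidAlgebra ℤ G) / 2
    rw [h, ha, hb]
    omega
  map_smul' n x := by
    obtain ⟨a, ha⟩ := aug_two_dvd G x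
    have h : aug G ((n • x : ↥((I2 G).restrictScalars ℤ)) : MonoidAlgebra ℤ G)
        = n * (2 * a) := by
      rw [Submodule.coe_smul, map_zsmul, ha, smul_eq_mul]
    show aug G ((n • x : ↥((I2 G).restrictScalars ℤ)) : MonoidAlgebra ℤ G) / 2
        = n • (aug G (x : MonoidAlgebra ℤ G) / 2)
    rw [h, ha, smul_eq_mul]
    have h2 : n * (2 * a) = 2 * (n * a) := by ring
    rw [h2, Int.mul_ediv_cancel_left _ two_ne_zero, Int.mul_ediv_cancel_left _ two_ne_zero]

lemma two_mul_tauMap (x : ↥((I2 G).restrictScalars ℤ)) :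
    2 * tauMap G x = aug G (x : MonoidAlgebra ℤ G) := by
  obtain ⟨a, ha⟩ := aug_two_dvd G x
  simp only [tauMap, LinearMap.coe_mk, AddHom.coe_mk, ha]
  omega

lemma tauMap_two : tauMap G (twoI2 G) = 1 := by
  have h : aug G ((twoI2 G : ↥((I2 G).restrictScalars ℤ)) : MonoidAlgebra ℤ G) = 2 := by
    show aug G (2 : MonoidAlgebra ℤ G) = 2
    rw [map_ofNat]
  simp only [tauMap, LinearMap.coe_mk, AddHom.coe_mk, h]
  rfl

lemma tauMap_inclI (a : ↥((augI G).restrictScalars ℤ)) :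
    tauMap G (inclI G a) = 0 := by
  have ha : aug G ((a : MonoidAlgebra ℤ G)) = 0 := a.2
  have h : ((inclI G a : ↥((I2 G).restrictScalars ℤ)) : MonoidAlgebra ℤ G)
      = (a : MonoidAlgebra ℤ G) := rfl
  simp only [tauMap, LinearMap.coe_mk, AddHom.coe_mk, h, ha]
  rfl

lemma tauMap_gm1 (g : G) : tauMap G (gm1 G g) = 0 := by
  have h : aug G ((gm1 G g : ↥((I2 G).restrictScalars ℤ)) : MonoidAlgebra ℤ G) = 0 := by
    show aug G (MonoidAlgebra.of ℤ G g - 1) = 0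
    rw [map_sub, map_one, MonoidAlgebra.of_apply, aug_single, sub_self]
  simp only [tauMap, LinearMap.coe_mk, AddHom.coe_mk, h]
  rfl

/-- The lift of the bilinear map `(a, b) ↦ τ(a) • b` on `(I,2) ⊗ (I,2)`. -/
noncomputable def Fmap :=
  TensorProduct.lift ((LinearMap.lsmul ℤ ↥((I2 G).restrictScalars ℤ)).comp (tauMap G))

lemma Fmap_tmul (a b : ↥((I2 G).restrictScalars ℤ)) :
    Fmap G (a ⊗ₜ[ℤ] b) = tauMap G a • b := rfl

/-- The retraction `(I,2) → I`, `a ↦ a - τ(a)·2`. -/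
noncomputable def piI : ↥((I2 G).restrictScalars ℤ) →ₗ[ℤ] ↥((augI G).restrictScalars ℤ) where
  toFun x := ⟨(x : MonoidAlgebra ℤ G) - tauMap G x • (2 : MonoidAlgebra ℤ G), by
    have : aug G ((x : MonoidAlgebra ℤ G) - tauMap G x • (2 : MonoidAlgebra ℤ G)) = 0 := by
      rw [map_sub, map_zsmul, map_ofNat, ← two_mul_tauMap G x, smul_eq_mul]
      ring
    exact this⟩
  map_add' x y := by
    apply Subtype.ext
    simp only [Submodule.coe_add, map_add, add_smul]
    abel
  map_smul' n x := by
    apply Subtype.ext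
    simp only [Submodule.coe_smul, map_smul, RingHom.id_apply, smul_eq_mul, mul_smul,
      smul_sub]

lemma inclI_piI_apply (a : ↥((I2 G).restrictScalars ℤ)) :
    inclI G (piI G a) = a - tauMap G a • twoI2 G := by
  apply Subtype.ext
  rfl

lemma mem_symTensorsR_iff {R : Type*} {V : Type*} [CommRing R] [AddCommGroup V] [Module R V]
    (x : V ⊗[R] V) : x ∈ symTensorsR R V ↔ TensorProduct.comm R V V x = x := by
  simp [symTensorsR, LinearMap.mem_ker, sub_eq_zero]

lemma Fmap_inclI (y : (↥((augI G).restrictScalars ℤ)) ⊗[ℤ] (↥((augI G).restrictScalars ℤ))) :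
    Fmap G (TensorProduct.map (inclI G) (inclI G) y) = 0 := by
  induction y using TensorProduct.induction_on with
  | zero => simp
  | tmul a b => rw [TensorProduct.map_tmul, Fmap_tmul, tauMap_inclI, zero_smul]
  | add y z hy hz => rw [map_add, map_add, hy, hz, add_zero]

lemma comm_map_piI (y : (↥((I2 G).restrictScalars ℤ)) ⊗[ℤ] (↥((I2 G).restrictScalars ℤ))) :
    TensorProduct.comm ℤ _ _ (TensorProduct.map (piI G) (piI G) y)
      = TensorProduct.map (piI G) (piI G) (TensorProduct.comm ℤ _ _ y) := by
  have h : (TensorProduct.comm ℤ _ _).toLinearMap ∘ₗ (TensorProduct.map (piI G) (piI G))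
      = (TensorProduct.map (piI G) (piI G)) ∘ₗ (TensorProduct.comm ℤ _ _).toLinearMap := by
    apply TensorProduct.ext'
    intro a b
    simp
  exact congrFun (congrArg (fun f => f.toFun) h) y

/-- The key decomposition identity on `(I,2) ⊗ (I,2)`. -/
lemma decomp (x : (↥((I2 G).restrictScalars ℤ)) ⊗[ℤ] (↥((I2 G).restrictScalars ℤ))) :
    x = TensorProduct.map (inclI G) (inclI G) (TensorProduct.map (piI G) (piI G) x)
      + (twoI2 G) ⊗ₜ[ℤ] (Fmap G x)
      + (Fmap G (TensorProduct.comm ℤ _ _ x)) ⊗ₜ[ℤ] (twoI2 G)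
      - tauMap G (Fmap G x) • ((twoI2 G) ⊗ₜ[ℤ] (twoI2 G)) := by
  induction x using TensorProduct.induction_on with
  | zero => simp
  | tmul a b =>
      rw [TensorProduct.map_tmul, TensorProduct.map_tmul, TensorProduct.comm_tmul, Fmap_tmul,
        Fmap_tmul, inclI_piI_apply, inclI_piI_apply, map_smul, smul_eq_mul]
      simp only [TensorProduct.tmul_sub, TensorProduct.sub_tmul, TensorProduct.smul_tmul',
        TensorProduct.tmul_smul, smul_smul, mul_comm (tauMap G b)]
      simp only [TensorProduct.smul_tmul, TensorProduct.tmul_smul, smul_smul, mul_comm (tauMap G b)]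
      module
  | add y z hy hz =>
      rw [map_add, map_add, map_add, map_add, map_add, map_add, TensorProduct.tmul_add,
        TensorProduct.add_tmul, add_smul]
      conv_lhs => rw [hy, hz]
      abel

lemma Fmap_equiv (g : G)
    (y : (↥((I2 G).restrictScalars ℤ)) ⊗[ℤ] (↥((I2 G).restrictScalars ℤ))) :
    Fmap G (((idealRep G (I2 G)).tprod (idealRep G (I2 G))) g y)
      = (idealRep G (I2 G)) g (Fmap G y) := by
  have key : ∀ a : ↥((I2 G).restrictScalars ℤ),
      tauMap G ((idealRep G (I2 G)) g a) = tauMap G a := by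
    intro a
    have hval : (((idealRep G (I2 G)) g a : ↥((I2 G).restrictScalars ℤ)) : MonoidAlgebra ℤ G)
        = MonoidAlgebra.of ℤ G g * (a : MonoidAlgebra ℤ G) := rfl
    have haug : aug G (((idealRep G (I2 G)) g a : ↥((I2 G).restrictScalars ℤ))
        : MonoidAlgebra ℤ G) = aug G (a : MonoidAlgebra ℤ G) := by
      rw [hval, map_mul]
      have : aug G (MonoidAlgebra.of ℤ G g) = 1 := aug_single G g
      rw [this, one_mul]
    simp only [tauMap, LinearMap.coe_mk, AddHom.coe_mk, haug]
  induction y using TensorProduct.induction_on with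
  | zero => simp
  | tmul a b =>
      rw [Representation.tprod_apply, TensorProduct.map_tmul, Fmap_tmul, Fmap_tmul, key,
        map_smul]
  | add y z hy hz =>
      rw [map_add, map_add, map_add, hy, hz, map_add]

/-- For a finite group `G`, there is an isomorphism of `ℤG`-modules
`φ : (I,2) → Γ((I,2))/Γ(I)` with `φ(2) = [2 ⊗ 2]` and
`φ(g - 1) = [2 ⊗ (g-1) + (g-1) ⊗ 2]` for `g ∈ G`.  Equivalently (as stated here), there is a
`G`-equivariant surjection `ψ : Γ((I,2)) → (I,2)` whose kernel is exactly the submodule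
`Γ(I) ⊆ Γ((I,2))`, and which is inverse to `φ` on the generators:
`ψ([2 ⊗ 2]) = 2` and `ψ([2 ⊗ (g-1) + (g-1) ⊗ 2]) = g - 1`. -/
theorem stmt7 [Finite G] :
    ∃ ψ : ↥(symTensors ↥((I2 G).restrictScalars ℤ)) →ₗ[ℤ] ↥((I2 G).restrictScalars ℤ),
      (∀ (g : G) (x : ↥(symTensors ↥((I2 G).restrictScalars ℤ))),
        ψ ((gammaRep (idealRep G (I2 G))) g x) = (idealRep G (I2 G)) g (ψ x)) ∧
      Function.Surjective ψ ∧
      LinearMap.ker ψ = gammaISub G ∧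
      ψ ⟨(twoI2 G) ⊗ₜ[ℤ] (twoI2 G), tmul_self_mem_symTensors _⟩ = twoI2 G ∧
      ∀ g : G, ψ ⟨(twoI2 G) ⊗ₜ[ℤ] (gm1 G g) + (gm1 G g) ⊗ₜ[ℤ] (twoI2 G),
          tmul_symm_mem_symTensors _ _⟩ = gm1 G g := by
  refine ⟨(Fmap G) ∘ₗ ((symTensors ↥((I2 G).restrictScalars ℤ)).subtype :
    ↥(symTensors ↥((I2 G).restrictScalars ℤ)) →ₗ[ℤ] _), ?_, ?_, ?_, ?_, ?_⟩
  · intro g x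
    have hval : ((gammaRep (idealRep G (I2 G)) g x :
          ↥(symTensors ↥((I2 G).restrictScalars ℤ))) :
          (↥((I2 G).restrictScalars ℤ)) ⊗[ℤ] (↥((I2 G).restrictScalars ℤ)))
        = ((idealRep G (I2 G)).tprod (idealRep G (I2 G))) g
            (x : (↥((I2 G).restrictScalars ℤ)) ⊗[ℤ] (↥((I2 G).restrictScalars ℤ))) := rfl
    show Fmap G (gammaRep (idealRep G (I2 G)) g x).1 = (idealRep G (I2 G)) g (Fmap G x.1)
    rw [hval]
    exact Fmap_equiv G g _
  · intro y
    refine ⟨⟨(twoI2 G) ⊗ₜ[ℤ] y + y ⊗ₜ[ℤ] (twoI2 G)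
        - tauMap G y • ((twoI2 G) ⊗ₜ[ℤ] (twoI2 G)), ?_⟩, ?_⟩
    · exact sub_mem (tmul_symm_mem_symTensors _ _)
        (Submodule.smul_mem _ _ (tmul_self_mem_symTensors _))
    · show Fmap G ((twoI2 G) ⊗ₜ[ℤ] y + y ⊗ₜ[ℤ] (twoI2 G)
          - tauMap G y • ((twoI2 G) ⊗ₜ[ℤ] (twoI2 G))) = y
      simp only [LinearMap.comp_apply, Submodule.subtype_apply, map_sub, map_add,
        Fmap_tmul, map_smul, map_zsmul, tauMap_two, one_smul]
      abel
  · ext x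
    constructor
    · intro hx
      have hx0 : Fmap G (x : (↥((I2 G).restrictScalars ℤ)) ⊗[ℤ]
          (↥((I2 G).restrictScalars ℤ))) = 0 := hx
      have hsym : TensorProduct.comm ℤ _ _ (x : (↥((I2 G).restrictScalars ℤ)) ⊗[ℤ]
            (↥((I2 G).restrictScalars ℤ)))
          = (x : (↥((I2 G).restrictScalars ℤ)) ⊗[ℤ] (↥((I2 G).restrictScalars ℤ))) :=
        (mem_symTensorsR_iff _).mp x.2
      have hd := decomp G (x : (↥((I2 G).restrictScalars ℤ)) ⊗[ℤ]
          (↥((I2 G).restrictScalars ℤ)))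
      rw [hsym, hx0, map_zero, TensorProduct.tmul_zero, TensorProduct.zero_tmul,
        zero_smul, add_zero, add_zero, sub_zero] at hd
      refine Submodule.mem_comap.mpr (Submodule.mem_map.mpr
        ⟨TensorProduct.map (piI G) (piI G) (x : (↥((I2 G).restrictScalars ℤ)) ⊗[ℤ]
          (↥((I2 G).restrictScalars ℤ))), ?_, ?_⟩)
      · rw [mem_symTensorsR_iff, comm_map_piI, hsym]
      · exact hd.symm
    · intro hx
      obtain ⟨y, hy, hyx⟩ := Submodule.mem_map.mp (Submodule.mem_comap.mp hx)
      have h0 : Fmap G (x : (↥((I2 G).restrictScalars ℤ)) ⊗[ℤ]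
          (↥((I2 G).restrictScalars ℤ))) = 0 := by
        rw [show (x : (↥((I2 G).restrictScalars ℤ)) ⊗[ℤ] (↥((I2 G).restrictScalars ℤ)))
            = TensorProduct.map (inclI G) (inclI G) y from hyx.symm]
        exact Fmap_inclI G y
      exact h0
  · show Fmap G ((twoI2 G) ⊗ₜ[ℤ] (twoI2 G)) = twoI2 G
    rw [Fmap_tmul, tauMap_two, one_smul]
  · intro g
    show Fmap G ((twoI2 G) ⊗ₜ[ℤ] (gm1 G g) + (gm1 G g) ⊗ₜ[ℤ] (twoI2 G)) = gm1 G g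
    rw [map_add, Fmap_tmul, Fmap_tmul, tauMap_two, tauMap_gm1, one_smul, zero_smul,
      add_zero]

end Stmt7
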